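/- Let p₀ < p₁ < 0, g⟦ρ⟧ < 0, λ > 0, and let Γ : [p₁,0] → (0,∞) be continuously differentiable. Consider the zero-mode linearized problem with atmospheric vorticity: find M : [p₀,0] → ℝ continuous, twice continuously differentiable on [p₀,p₁] and on [p₁,0], such that (Γ³M′)′ = 0 on (p₁,0), M″ = 0 on (p₀,p₁), M(p₀) = 0, M(0) = M(p₁), and Γ(p₁)³M′(p₁⁺) − λ³M′(p₁⁻) = g⟦ρ⟧M(p₁). Then this problem has a solution that is not identically zero if and only if λ³ = −g⟦ρ⟧(p₁−p₀). -/

import Mathlib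

open Set

private lemma const_on_Icc' {f : ℝ → ℝ} {a b : ℝ} (hab : a < b)
    (hc : ContinuousOn f (Icc a b))
    (hd : ∀ x ∈ Ioo a b, HasDerivAt f 0 x) :
    ∀ x ∈ Icc a b, f x = f a := by
  have hdiff : DifferentiableOn ℝ f (interior (Icc a b)) := by
    rw [interior_Icc]; exact fun x hx => (hd x hx).differentiableAt.differentiableWithinAt
  have hmono : MonotoneOn f (Icc a b) := by
    refine monotoneOn_of_deriv_nonneg (convex_Icc a b) hc hdiff ?_
    rw [interior_Icc]; intro x hx; rw [(hd x hx).deriv]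
  have hanti : AntitoneOn f (Icc a b) := by
    refine antitoneOn_of_deriv_nonpos (convex_Icc a b) hc hdiff ?_
    rw [interior_Icc]; intro x hx; rw [(hd x hx).deriv]
  intro x hx
  exact le_antisymm (hanti (left_mem_Icc.2 hab.le) hx hx.1)
    (hmono (left_mem_Icc.2 hab.le) hx hx.1)

/-- **Zero mode of the linearized problem with atmospheric vorticity.**
Let `p₀ < p₁ < 0`, `gρ < 0`, `λ > 0`, and let `Γ : [p₁,0] → (0,∞)` be
continuously differentiable.  The problem of finding `M : [p₀,0] → ℝ`
continuous, twice continuously differentiable on `[p₀,p₁]` and on `[p₁,0]`,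
with `(Γ³M′)′ = 0` on `(p₁,0)`, `M″ = 0` on `(p₀,p₁)`, `M(p₀) = 0`,
`M(0) = M(p₁)` and `Γ(p₁)³M′(p₁⁺) − λ³M′(p₁⁻) = gρ·M(p₁)` has a solution that is
not identically zero if and only if `λ³ = −gρ(p₁−p₀)`. -/
theorem stmt_18 (p₀ p₁ gρ lam : ℝ) (h₀₁ : p₀ < p₁) (h₁ : p₁ < 0)
    (hgρ : gρ < 0) (hlam : 0 < lam)
    (Γ : ℝ → ℝ) (hΓpos : ∀ p ∈ Set.Icc p₁ 0, 0 < Γ p)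
    (hΓC1 : ContDiffOn ℝ 1 Γ (Set.Icc p₁ 0)) :
    (∃ M : ℝ → ℝ,
      (ContinuousOn M (Set.Icc p₀ 0) ∧
        ContDiffOn ℝ 2 M (Set.Icc p₀ p₁) ∧
        ContDiffOn ℝ 2 M (Set.Icc p₁ 0) ∧
        (∀ p ∈ Set.Ioo p₁ (0 : ℝ), deriv (fun p' => Γ p' ^ 3 * deriv M p') p = 0) ∧
        (∀ p ∈ Set.Ioo p₀ p₁, deriv (deriv M) p = 0) ∧
        M p₀ = 0 ∧ M 0 = M p₁ ∧
        Γ p₁ ^ 3 * derivWithin M (Set.Icc p₁ 0) p₁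
          - lam ^ 3 * derivWithin M (Set.Icc p₀ p₁) p₁ = gρ * M p₁) ∧
      ¬(∀ p ∈ Set.Icc p₀ 0, M p = 0)) ↔
    lam ^ 3 = -gρ * (p₁ - p₀) := by
  have hUD₁ : UniqueDiffOn ℝ (Icc p₀ p₁) := uniqueDiffOn_Icc h₀₁
  have hUD₂ : UniqueDiffOn ℝ (Icc p₁ (0:ℝ)) := uniqueDiffOn_Icc h₁
  have hp₁mem₁ : p₁ ∈ Icc p₀ p₁ := right_mem_Icc.2 h₀₁.le
  have hp₁mem₂ : p₁ ∈ Icc p₁ (0:ℝ) := left_mem_Icc.2 h₁.le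
  constructor
  · -- forward direction
    rintro ⟨M, ⟨hcont, hC2L, hC2R, hodeR, hodeL, hM0, hMtop, hbc⟩, hnontriv⟩
    -- M is differentiable at interior points of each piece
    have hMdiffL : ∀ x ∈ Ioo p₀ p₁, DifferentiableAt ℝ M x := fun x hx =>
      (hC2L.differentiableOn (by norm_num)).differentiableAt
        (Icc_mem_nhds hx.1 hx.2)
    have hMdiffR : ∀ x ∈ Ioo p₁ (0:ℝ), DifferentiableAt ℝ M x := fun x hx =>
      (hC2R.differentiableOn (by norm_num)).differentiableAt
        (Icc_mem_nhds hx.1 hx.2)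
    -- deriv M is differentiable on the open pieces
    have hderivL : ContDiffOn ℝ 1 (deriv M) (Ioo p₀ p₁) :=
      (hC2L.mono Ioo_subset_Icc_self).deriv_of_isOpen isOpen_Ioo (by norm_num)
    have hderivR : ContDiffOn ℝ 1 (deriv M) (Ioo p₁ (0:ℝ)) :=
      (hC2R.mono Ioo_subset_Icc_self).deriv_of_isOpen isOpen_Ioo (by norm_num)
    -- deriv M is constant, say c, on Ioo p₀ p₁
    set c : ℝ := deriv M ((p₀ + p₁) / 2) with hc
    have hmid : (p₀ + p₁) / 2 ∈ Ioo p₀ p₁ := ⟨by linarith, by linarith⟩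
    have hfderL : ∀ x ∈ Ioo p₀ p₁, fderivWithin ℝ (deriv M) (Ioo p₀ p₁) x = 0 := by
      intro x hx
      have hdx : DifferentiableAt ℝ (deriv M) x :=
        (hderivL.differentiableOn (by norm_num)).differentiableAt
          (isOpen_Ioo.mem_nhds hx)
      have h0 : HasDerivAt (deriv M) 0 x := by
        have := hdx.hasDerivAt
        rwa [hodeL x hx] at this
      rw [fderivWithin_of_isOpen isOpen_Ioo hx, h0.hasFDerivAt.fderiv]
      ext y; simp
    have hderivMc : ∀ x ∈ Ioo p₀ p₁, deriv M x = c := fun x hx =>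
      (convex_Ioo p₀ p₁).is_const_of_fderivWithin_eq_zero
        (hderivL.differentiableOn (by norm_num)) hfderL hx hmid
    -- hence M is affine on Icc p₀ p₁ : M p = c * (p - p₀)
    have haff : ∀ p ∈ Icc p₀ p₁, M p = c * (p - p₀) := by
      have hg : ∀ x ∈ Icc p₀ p₁, M x - c * (x - p₀) = M p₀ - c * (p₀ - p₀) :=
        const_on_Icc' h₀₁
          (ContinuousOn.sub (hcont.mono (Icc_subset_Icc le_rfl h₁.le))
            (by fun_prop))
          (fun x hx => by
            have h1 : HasDerivAt M c x := by
              have := (hMdiffL x hx).hasDerivAt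
              rwa [hderivMc x hx] at this
            have h2 := h1.sub (((hasDerivAt_id x).sub_const p₀).const_mul c)
            rw [mul_one, sub_self] at h2
            exact h2)
      intro p hp
      have := hg p hp
      rw [hM0] at this
      linarith
    -- Γ^3 * deriv M is constant, say k, on Ioo p₁ 0
    have hGdiff : ∀ x ∈ Ioo p₁ (0:ℝ),
        DifferentiableAt ℝ (fun p' => Γ p' ^ 3 * deriv M p') x := by
      intro x hx
      have h1 : DifferentiableAt ℝ Γ x :=
        (hΓC1.differentiableOn (by norm_num)).differentiableAt
          (Icc_mem_nhds hx.1 hx.2)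
      have h2 : DifferentiableAt ℝ (deriv M) x :=
        (hderivR.differentiableOn (by norm_num)).differentiableAt
          (isOpen_Ioo.mem_nhds hx)
      exact ((h1.pow 3).mul h2)
    set k : ℝ := Γ (p₁ / 2) ^ 3 * deriv M (p₁ / 2) with hk
    have hmid2 : p₁ / 2 ∈ Ioo p₁ (0:ℝ) := ⟨by linarith, by linarith⟩
    have hfderR : ∀ x ∈ Ioo p₁ (0:ℝ),
        fderivWithin ℝ (fun p' => Γ p' ^ 3 * deriv M p') (Ioo p₁ (0:ℝ)) x = 0 := by
      intro x hx
      have h0 : HasDerivAt (fun p' => Γ p' ^ 3 * deriv M p') 0 x := by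
        have := (hGdiff x hx).hasDerivAt
        rwa [hodeR x hx] at this
      rw [fderivWithin_of_isOpen isOpen_Ioo hx, h0.hasFDerivAt.fderiv]
      ext y; simp
    have hGk : ∀ x ∈ Ioo p₁ (0:ℝ), Γ x ^ 3 * deriv M x = k := fun x hx =>
      (convex_Ioo p₁ (0:ℝ)).is_const_of_fderivWithin_eq_zero
        (fun x hx => (hGdiff x hx).differentiableWithinAt) hfderR hx hmid2
    -- k = 0
    have hΓ3pos : ∀ x ∈ Ioo p₁ (0:ℝ), 0 < Γ x ^ 3 :=
      fun x hx => pow_pos (hΓpos x (Ioo_subset_Icc_self hx)) 3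
    have hcontR : ContinuousOn M (Icc p₁ (0:ℝ)) := hC2R.continuousOn
    have hk0 : k = 0 := by
      by_contra hkne
      rcases lt_or_gt_of_ne hkne with hneg | hpos
      · -- k < 0 : deriv M < 0 on Ioo, M strictly decreasing, M p₁ > M 0
        have : StrictAntiOn M (Icc p₁ (0:ℝ)) := by
          refine strictAntiOn_of_deriv_neg (convex_Icc p₁ 0) hcontR ?_
          rw [interior_Icc]
          intro x hx
          have h := hGk x hx
          have hpos' := hΓ3pos x hx
          by_contra hge
          push_neg at hge
          nlinarith [mul_nonneg hpos'.le hge]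
        have := this hp₁mem₂ (right_mem_Icc.2 h₁.le) h₁
        rw [hMtop] at this; exact lt_irrefl _ this
      · have : StrictMonoOn M (Icc p₁ (0:ℝ)) := by
          refine strictMonoOn_of_deriv_pos (convex_Icc p₁ 0) hcontR ?_
          rw [interior_Icc]
          intro x hx
          have h := hGk x hx
          have hpos' := hΓ3pos x hx
          by_contra hge
          push_neg at hge
          nlinarith [mul_nonneg hpos'.le (neg_nonneg.2 hge)]
        have := this hp₁mem₂ (right_mem_Icc.2 h₁.le) h₁
        rw [hMtop] at this; exact lt_irrefl _ this
    -- hence deriv M = 0 on Ioo p₁ 0 and M is constant on Icc p₁ 0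
    have hderiv0 : ∀ x ∈ Ioo p₁ (0:ℝ), deriv M x = 0 := by
      intro x hx
      have h := hGk x hx
      rw [hk0] at h
      exact (mul_eq_zero.mp h).resolve_left (hΓ3pos x hx).ne'
    have hconstR : ∀ x ∈ Icc p₁ (0:ℝ), M x = M p₁ := by
      refine const_on_Icc' h₁ hcontR (fun x hx => ?_)
      have := (hMdiffR x hx).hasDerivAt
      rwa [hderiv0 x hx] at this
    -- compute the two one-sided derivatives at p₁
    have hdR : derivWithin M (Icc p₁ (0:ℝ)) p₁ = 0 := by
      rw [derivWithin_congr hconstR (hconstR p₁ hp₁mem₂)]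
      simp
    have hdL : derivWithin M (Icc p₀ p₁) p₁ = c := by
      rw [derivWithin_congr haff (haff p₁ hp₁mem₁)]
      have : HasDerivWithinAt (fun p => c * (p - p₀)) c (Icc p₀ p₁) p₁ := by
        simpa using (((hasDerivAt_id p₁).sub_const p₀).const_mul c).hasDerivWithinAt
      exact this.derivWithin (hUD₁ p₁ hp₁mem₁)
    -- c ≠ 0
    have hcne : c ≠ 0 := by
      intro hc0
      apply hnontriv
      intro p hp
      rcases le_or_gt p p₁ with hple | hpgt
      · rw [haff p ⟨hp.1, hple⟩, hc0, zero_mul]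
      · rw [hconstR p ⟨hpgt.le, hp.2⟩, haff p₁ hp₁mem₁, hc0, zero_mul]
    -- conclude
    rw [hdR, hdL, haff p₁ hp₁mem₁] at hbc
    have h2 : (lam ^ 3 + gρ * (p₁ - p₀)) * c = 0 := by linear_combination -hbc
    rcases mul_eq_zero.mp h2 with h3 | h3
    · linarith
    · exact absurd h3 hcne
  · -- backward direction: construct the solution
    intro hlameq
    refine ⟨fun p => min p p₁ - p₀, ⟨?_, ?_, ?_, ?_, ?_, ?_, ?_, ?_⟩, ?_⟩
    · fun_prop
    · exact ((contDiff_id.sub contDiff_const :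
          ContDiff ℝ 2 (fun p : ℝ => p - p₀)).contDiffOn).congr
        (fun p hp => by simp [min_eq_left hp.2])
    · exact contDiffOn_const.congr (fun p hp => by
        rw [min_eq_right hp.1])
    · -- (Γ³ M′)′ = 0 on (p₁,0)
      intro p hp
      have hev : (fun p' => Γ p' ^ 3 * deriv (fun q => min q p₁ - p₀) p')
          =ᶠ[nhds p] fun _ => (0:ℝ) := by
        filter_upwards [isOpen_Ioi.eventually_mem (show p ∈ Ioi p₁ from hp.1)] with x hx
        have hd : deriv (fun q => min q p₁ - p₀) x = 0 := by
          have : (fun q => min q p₁ - p₀) =ᶠ[nhds x] fun _ => p₁ - p₀ := by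
            filter_upwards [isOpen_Ioi.eventually_mem hx] with y hy
            rw [min_eq_right (le_of_lt hy)]
          rw [this.deriv_eq, deriv_const]
        rw [hd, mul_zero]
      rw [hev.deriv_eq, deriv_const]
    · -- M″ = 0 on (p₀,p₁)
      intro p hp
      have hev : deriv (fun q => min q p₁ - p₀) =ᶠ[nhds p] fun _ => (1:ℝ) := by
        filter_upwards [isOpen_Iio.eventually_mem (show p ∈ Iio p₁ from hp.2)] with x hx
        have : (fun q => min q p₁ - p₀) =ᶠ[nhds x] fun q => q - p₀ := by
          filter_upwards [isOpen_Iio.eventually_mem hx] with y hy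
          rw [min_eq_left (le_of_lt hy)]
        rw [this.deriv_eq]
        simp
      rw [hev.deriv_eq, deriv_const]
    · simp [min_eq_left h₀₁.le]
    · simp [min_eq_right h₁.le]
    · -- boundary condition
      have hdR : derivWithin (fun q => min q p₁ - p₀) (Icc p₁ (0:ℝ)) p₁ = 0 := by
        rw [derivWithin_congr (f := fun _ => p₁ - p₀)
          (fun y hy => by simp [min_eq_right hy.1]) (by simp)]
        simp
      have hdL : derivWithin (fun q => min q p₁ - p₀) (Icc p₀ p₁) p₁ = 1 := by
        rw [derivWithin_congr (f := fun q => q - p₀)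
          (fun y hy => by simp [min_eq_left hy.2]) (by simp)]
        have : HasDerivWithinAt (fun q => q - p₀) 1 (Icc p₀ p₁) p₁ :=
          ((hasDerivAt_id p₁).sub_const p₀).hasDerivWithinAt
        exact this.derivWithin (hUD₁ p₁ hp₁mem₁)
      rw [hdR, hdL]
      simp only [min_self]
      rw [hlameq]; ring
    · -- nontriviality
      intro hall
      have := hall p₁ ⟨h₀₁.le, h₁.le⟩
      simp only [min_self] at this
      linarith
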